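/- arXiv:2402.05464 — 3 statements merged into one kernel-verified Lean document; each statement's English description precedes it below -/
import Mathlib

section
/- There exists a dimensional constant c > 0 such that for every Borel set E ⊆ ℝᵈ, every λ ∈ (0,1), and every x ∈ ℝᵈ, one has χ_{{Mχ_E > λ}}(x) ≤ (c/(λ(1 - log λ))) · M(χ_{{Mχ_E > λ}} · Mχ_E)(x). -/
open MeasureTheory ENNReal Set

/-- The closed cube in `ℝ^d` with center `c` and half side length `r`. -/
def cube (d : ℕ) (c : Fin d → ℝ) (r : ℝ) : Set (Fin d → ℝ) :=
  {y | ∀ i, |y i - c i| ≤ r}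

/-- The uncentered Hardy–Littlewood maximal operator over cubes. -/
noncomputable def maximal (d : ℕ) (f : (Fin d → ℝ) → ℝ≥0∞) (x : Fin d → ℝ) : ℝ≥0∞ :=
  ⨆ (c : Fin d → ℝ) (r : ℝ) (_ : 0 < r) (_ : x ∈ cube d c r),
    (∫⁻ y in cube d c r, f y) / volume (cube d c r)

/-- `u(A) = ∫_A u` for a weight `u` on `ℝ^d`. -/
noncomputable def uMeas (d : ℕ) (u : (Fin d → ℝ) → ℝ≥0∞) (A : Set (Fin d → ℝ)) : ℝ≥0∞ :=
  ∫⁻ x in A, u x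

/-- `W(t) = ∫_0^t w(s) ds` (extended to arguments in `ℝ≥0∞`). -/
noncomputable def Wfun (w : ℝ → ℝ≥0∞) (t : ℝ≥0∞) : ℝ≥0∞ :=
  ∫⁻ s in {s : ℝ | 0 < s ∧ ENNReal.ofReal s < t}, w s

/-- `‖f‖_{Λ^p_u(w)}^p = ∫_0^∞ p t^{p-1} W(u({|f| > t})) dt`. -/
noncomputable def lorentzP (d : ℕ) (p : ℝ) (u : (Fin d → ℝ) → ℝ≥0∞) (w : ℝ → ℝ≥0∞)
    (f : (Fin d → ℝ) → ℝ≥0∞) : ℝ≥0∞ :=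
  ∫⁻ t in Set.Ioi (0:ℝ), ENNReal.ofReal (p * t ^ (p-1)) *
    Wfun w (uMeas d u {x | ENNReal.ofReal t < f x})



open Metric

section Aux
variable {d : ℕ}

lemma cube_eq_closedBall (c : Fin d → ℝ) {r : ℝ} (hr : 0 ≤ r) :
    cube d c r = closedBall c r := by
  ext y
  simp only [cube, mem_setOf_eq, mem_closedBall, dist_pi_le_iff hr, Real.dist_eq]

lemma volume_cb (c : Fin d → ℝ) {r : ℝ} (hr : 0 ≤ r) :
    volume (closedBall c r) = ENNReal.ofReal ((2*r)^d) := by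
  rw [Real.volume_pi_closedBall c hr]
  simp

lemma volume_cb_pos (c : Fin d → ℝ) {r : ℝ} (hr : 0 < r) :
    0 < volume (closedBall c r) := by
  rw [volume_cb c hr.le]
  have : (0:ℝ) < (2*r)^d := by positivity
  simpa using this

lemma volume_cb_ne_top (c : Fin d → ℝ) {r : ℝ} (hr : 0 ≤ r) :
    volume (closedBall c r) ≠ ⊤ := by
  rw [volume_cb c hr]; exact ofReal_ne_top

lemma le_maximal (f : (Fin d → ℝ) → ℝ≥0∞) (x c : Fin d → ℝ) {r : ℝ} (hr : 0 < r)
    (hx : x ∈ closedBall c r) :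
    (∫⁻ y in closedBall c r, f y) / volume (closedBall c r) ≤ maximal d f x := by
  rw [maximal]
  rw [← cube_eq_closedBall c hr.le] at hx ⊢
  exact le_iSup_of_le c (le_iSup_of_le r (le_iSup_of_le hr (le_iSup_of_le hx le_rfl)))

lemma maximal_mono {f g : (Fin d → ℝ) → ℝ≥0∞} (h : ∀ y, f y ≤ g y) (x : Fin d → ℝ) :
    maximal d f x ≤ maximal d g x := by
  apply iSup_mono; intro c; apply iSup_mono; intro r; apply iSup_mono; intro hr
  apply iSup_mono; intro hx
  exact ENNReal.div_le_div_right (lintegral_mono fun y => h y) _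

lemma setLIntegral_indicator_one {F C : Set (Fin d → ℝ)} (hF : MeasurableSet F) :
    (∫⁻ y in C, F.indicator 1 y) = volume (F ∩ C) := by
  rw [lintegral_indicator hF]
  simp [Measure.restrict_restrict hF, inter_comm]

-- if density of F in ball > t then maximal > t on the ball
lemma lt_maximal_of_density {F : Set (Fin d → ℝ)} (hF : MeasurableSet F)
    {z : Fin d → ℝ} {ρ : ℝ} (hρ : 0 < ρ) {t : ℝ≥0∞}
    (h : t * volume (closedBall z ρ) < volume (F ∩ closedBall z ρ)) :
    ∀ y ∈ closedBall z ρ, t < maximal d (F.indicator 1) y := by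
  intro y hy
  refine lt_of_lt_of_le ?_ (le_maximal (F.indicator 1) y z hρ hy)
  rw [setLIntegral_indicator_one hF]
  rw [ENNReal.lt_div_iff_mul_lt (Or.inl (volume_cb_pos z hρ).ne')
    (Or.inl (volume_cb_ne_top z hρ.le))]
  exact h

-- extraction from membership in the level set
lemma exists_cube_of_mem {E : Set (Fin d → ℝ)} {l : ℝ} {x : Fin d → ℝ}
    (hx : ENNReal.ofReal l < maximal d (E.indicator 1) x) (hE : MeasurableSet E) :
    ∃ (c : Fin d → ℝ) (r : ℝ), 0 < r ∧ x ∈ closedBall c r ∧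
      ENNReal.ofReal l * volume (closedBall c r) < volume (E ∩ closedBall c r) := by
  rw [maximal] at hx
  simp only [lt_iSup_iff] at hx
  obtain ⟨c, r, hr, hxc, h⟩ := hx
  rw [cube_eq_closedBall c hr.le] at hxc h
  refine ⟨c, r, hr, hxc, ?_⟩
  rw [setLIntegral_indicator_one hE] at h
  rw [ENNReal.lt_div_iff_mul_lt (Or.inl (volume_cb_pos c hr).ne')
    (Or.inl (volume_cb_ne_top c hr.le))] at h
  exact h


lemma easy_lower {E : Set (Fin d → ℝ)} (hE : MeasurableSet E) {l : ℝ}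
    {c x : Fin d → ℝ} {ρ : ℝ} (hρ : 0 < ρ) (hx : x ∈ closedBall c ρ)
    (hD : ENNReal.ofReal l * volume (closedBall c ρ) < volume (E ∩ closedBall c ρ)) :
    volume (E ∩ closedBall c ρ) / volume (closedBall c ρ) ≤
      maximal d (({y | ENNReal.ofReal l < maximal d (E.indicator 1) y}).indicator
        (maximal d (E.indicator 1))) x := by
  set B := closedBall c ρ with hB
  set D := volume (E ∩ B) / volume B with hDdef
  have hvol0 : volume B ≠ 0 := (volume_cb_pos c hρ).ne'
  have hvolt : volume B ≠ ⊤ := volume_cb_ne_top c hρ.le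
  have hDl : ENNReal.ofReal l < D := by
    rw [hDdef, ENNReal.lt_div_iff_mul_lt (Or.inl hvol0) (Or.inl hvolt)]
    exact hD
  have key : ∀ y ∈ B, D ≤ ({y | ENNReal.ofReal l < maximal d (E.indicator 1) y}).indicator
      (maximal d (E.indicator 1)) y := by
    intro y hy
    have h1 : D ≤ maximal d (E.indicator 1) y := by
      refine le_trans ?_ (le_maximal (E.indicator 1) y c hρ hy)
      rw [setLIntegral_indicator_one hE]
    have h2 : y ∈ {y | ENNReal.ofReal l < maximal d (E.indicator 1) y} :=
      lt_of_lt_of_le hDl h1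
    rw [indicator_of_mem h2]
    exact h1
  refine le_trans ?_ (le_maximal _ x c hρ hx)
  rw [ENNReal.le_div_iff_mul_le (Or.inl hvol0) (Or.inl hvolt)]
  calc D * volume B = ∫⁻ _ in B, D := by rw [setLIntegral_const]
    _ ≤ _ := setLIntegral_mono' measurableSet_closedBall key

-- λ(1 - log λ) ≤ 1
lemma numA {l : ℝ} (hl0 : 0 < l) (hl1 : l < 1) : l * (1 - Real.log l) ≤ 1 := by
  have h := Real.log_le_sub_one_of_pos (show (0:ℝ) < 1/l by positivity)
  rw [Real.log_div one_ne_zero (ne_of_gt hl0), Real.log_one] at h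
  have : 1 - Real.log l ≤ 1/l := by linarith
  calc l * (1 - Real.log l) ≤ l * (1/l) := by
        apply mul_le_mul_of_nonneg_left this hl0.le
    _ = 1 := by field_simp

lemma numB {l : ℝ} (hl : 1/16 ≤ l) (hl1 : l < 1) : 1 - Real.log l ≤ 4 := by
  have h1 : Real.log (1/16) ≤ Real.log l := Real.log_le_log (by norm_num) hl
  have h2 : Real.log (1/16) = - Real.log 16 := by
    rw [Real.log_div one_ne_zero (by norm_num), Real.log_one]; ring
  have h3 : Real.log 16 = 4 * Real.log 2 := by
    rw [show (16:ℝ) = 2^4 by norm_num, Real.log_pow]; push_cast; ring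
  nlinarith [Real.log_two_lt_d9]

lemma num5 {l β : ℝ} {K : ℕ} (hl : 0 < l) (hlβ : l < β) (hβ : β ≤ 1/16)
    (hK : Real.log (1/β) ≤ (K:ℝ)) : l * (1 - Real.log l) ≤ 64 * ((K:ℝ) * β) := by
  have hβ0 : 0 < β := hl.trans hlβ
  have hlog1 : Real.log (1/β) = - Real.log β := by
    rw [Real.log_div one_ne_zero (ne_of_gt hβ0), Real.log_one]; ring
  have hlogβ : 1 ≤ - Real.log β := by
    have h1 : Real.log β ≤ Real.log (1/16) := Real.log_le_log hβ0 hβ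
    have h2 : Real.log (1/16) = - (4 * Real.log 2) := by
      rw [Real.log_div one_ne_zero (by norm_num), Real.log_one,
        show (16:ℝ) = 2^4 by norm_num, Real.log_pow]; push_cast; ring
    nlinarith [Real.log_two_gt_d9]
  -- l * (log β - log l) ≤ β - l
  have hmain : l * (Real.log β - Real.log l) ≤ β - l := by
    have h := Real.log_le_sub_one_of_pos (show (0:ℝ) < β/l by positivity)
    rw [Real.log_div (ne_of_gt hβ0) (ne_of_gt hl)] at h
    have h2 : l * (Real.log β - Real.log l) ≤ l * (β/l - 1) :=
      mul_le_mul_of_nonneg_left h hl.le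
    have h3 : l * (β/l - 1) = β - l := by field_simp
    linarith
  have hKβ : - Real.log β ≤ (K:ℝ) := by rwa [hlog1] at hK
  -- l(1 - log l) = l + l(logβ - logl) - l logβ ≤ l + (β - l) + l(-logβ) ≤ β + β(-logβ) ≤ 2β(-logβ) ≤ 2βK
  have hs1 : l * (1 - Real.log l) ≤ β + β * (- Real.log β) := by nlinarith
  have hs2 : β + β * (- Real.log β) ≤ 2 * (β * (- Real.log β)) := by nlinarith
  have hs3 : β * (- Real.log β) ≤ β * (K:ℝ) := by nlinarith
  nlinarith

lemma numK {β : ℝ} (hβ0 : 0 < β) (hβ : β ≤ 1/16) :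
    (2:ℝ)^(Nat.floor (Real.logb 2 (1/β))) * β ≤ 1 ∧
    Real.log (1/β) ≤ (Nat.floor (Real.logb 2 (1/β)) : ℝ) := by
  set K := Nat.floor (Real.logb 2 (1/β)) with hK
  have hβinv : (16:ℝ) ≤ 1/β := by
    rw [le_div_iff₀ hβ0]; linarith
  have hlogb_nonneg : 0 ≤ Real.logb 2 (1/β) :=
    Real.logb_nonneg one_lt_two (by linarith)
  have hfloor_le : (K:ℝ) ≤ Real.logb 2 (1/β) := Nat.floor_le hlogb_nonneg
  have hlt : Real.logb 2 (1/β) < (K:ℝ) + 1 := Nat.lt_floor_add_one _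
  have hL16 : Real.log 16 ≤ Real.log (1/β) := Real.log_le_log (by norm_num) hβinv
  have hlog16 : Real.log 16 = 4 * Real.log 2 := by
    rw [show (16:ℝ) = 2^4 by norm_num, Real.log_pow]; push_cast; ring
  have hlogb_eq : Real.logb 2 (1/β) = Real.log (1/β) / Real.log 2 := rfl
  constructor
  · have h1 : (2:ℝ)^K ≤ 1/β := by
      have h2 : (2:ℝ)^(K:ℝ) ≤ (2:ℝ)^(Real.logb 2 (1/β)) :=
        Real.rpow_le_rpow_of_exponent_le one_le_two hfloor_le
      rw [Real.rpow_logb two_pos (by norm_num) (by positivity)] at h2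
      rwa [Real.rpow_natCast] at h2
    calc (2:ℝ)^K * β ≤ (1/β) * β := by
          apply mul_le_mul_of_nonneg_right h1 hβ0.le
      _ = 1 := by field_simp
  · have hlog2pos : 0 < Real.log 2 := Real.log_pos one_lt_two
    have h3 : Real.log (1/β) < ((K:ℝ)+1) * Real.log 2 := by
      rw [hlogb_eq, div_lt_iff₀ hlog2pos] at hlt
      exact hlt
    nlinarith [Real.log_two_lt_d9, Real.log_two_gt_d9]

lemma finish_lem {c q lam : ℝ} (hq : 0 ≤ q)
    (hlam : 0 < lam * (1 - Real.log lam)) (hineq : lam * (1 - Real.log lam) ≤ c * q)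
    {M : ℝ≥0∞} (hM : ENNReal.ofReal q ≤ M) :
    1 ≤ ENNReal.ofReal (c / (lam * (1 - Real.log lam))) * M := by
  have hc0 : 0 ≤ c := by nlinarith
  calc (1:ℝ≥0∞) = ENNReal.ofReal 1 := by simp
    _ ≤ ENNReal.ofReal (c / (lam * (1 - Real.log lam)) * q) := by
        apply ENNReal.ofReal_le_ofReal
        rw [div_mul_eq_mul_div, le_div_iff₀ hlam]
        linarith
    _ = ENNReal.ofReal (c / (lam * (1 - Real.log lam))) * ENNReal.ofReal q := by
        rw [ENNReal.ofReal_mul (by positivity)]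
    _ ≤ _ := mul_le_mul_right hM _

-- geometric sum bound in ℝ≥0∞ : sum over range (j+1) of ofReal(2^k β/2) ≤ ofReal (2^j β)
lemma geom_bound {β : ℝ} (hβ : 0 ≤ β) (j : ℕ) :
    ∑ k ∈ Finset.range (j+1), ENNReal.ofReal (2^k * β / 2) ≤ ENNReal.ofReal (2^j * β) := by
  rw [← ENNReal.ofReal_sum_of_nonneg (fun k _ => by positivity)]
  apply ENNReal.ofReal_le_ofReal
  rw [← Finset.sum_div, ← Finset.sum_mul]
  rw [geom_sum_eq (by norm_num : (2:ℝ) ≠ 1)]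
  rw [div_le_iff₀ (by norm_num : (0:ℝ) < 2)]
  have h1 : (2:ℝ)^(j+1) = 2 * 2^j := by ring
  nlinarith [pow_nonneg (by norm_num : (0:ℝ) ≤ 2) j, hβ]

/-- reverse weak type inequality with localization -/
lemma rwt {F : Set (Fin d → ℝ)} (hF : MeasurableSet F) (c₀ : Fin d → ℝ) {ρ t : ℝ}
    (hρ : 0 < ρ) (hFb : F ⊆ closedBall c₀ ρ) (ht0 : 0 < t) (ht1 : t < 1)
    (hFsmall : volume F ≤ ENNReal.ofReal t * volume (closedBall c₀ ρ)) :
    ∃ S : Set (Fin d → ℝ), MeasurableSet S ∧ S ⊆ closedBall c₀ (3*ρ) ∧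
      (∀ y ∈ S, ENNReal.ofReal t < maximal d (F.indicator 1) y) ∧
      volume F ≤ ENNReal.ofReal t * ((4:ℝ≥0∞)^d * volume S) := by
  classical
  have ht0' : ENNReal.ofReal t ≠ 0 := by
    simp [ENNReal.ofReal_eq_zero, not_le, ht0]
  by_cases hF0 : volume F = 0
  · exact ⟨∅, MeasurableSet.empty, empty_subset _, fun y hy => absurd hy (notMem_empty y),
      by simp [hF0]⟩
  -- density points
  set A := {y : Fin d → ℝ | Filter.Tendsto
      (fun rad => volume (F ∩ closedBall y rad) / volume (closedBall y rad))
      (nhdsWithin 0 (Set.Ioi 0)) (nhds 1)} with hA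
  have hAae : volume (Aᶜ ∩ F) = 0 := by
    have h := Besicovitch.ae_tendsto_measure_inter_div volume F
    rw [MeasureTheory.ae_iff] at h
    rwa [Measure.restrict_apply' hF] at h
  set G := A ∩ F with hG
  -- selection of cubes
  have Hsel : ∀ y ∈ G, ∃ p : ℝ × (Fin d → ℝ),
      0 < p.1 ∧ y ∈ closedBall p.2 p.1 ∧
      ENNReal.ofReal t * volume (closedBall p.2 p.1) < volume (F ∩ closedBall p.2 p.1) ∧
      ¬ ∃ q : ℝ, 2 * p.1 < q ∧ (0 < q ∧ ∃ z, y ∈ closedBall z q ∧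
        ENNReal.ofReal t * volume (closedBall z q) < volume (F ∩ closedBall z q)) := by
    intro y hy
    set Ad := {q : ℝ | 0 < q ∧ ∃ z, y ∈ closedBall z q ∧
      ENNReal.ofReal t * volume (closedBall z q) < volume (F ∩ closedBall z q)} with hAd
    have hne : Ad.Nonempty := by
      have hyA : y ∈ A := hy.1
      have hev : ∀ᶠ rad in nhdsWithin (0:ℝ) (Set.Ioi 0),
          ENNReal.ofReal t < volume (F ∩ closedBall y rad) / volume (closedBall y rad) :=
        hyA.eventually (eventually_gt_nhds (by
          simpa using ENNReal.ofReal_lt_one.2 ht1))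
      obtain ⟨rad, hrad1, hrad2⟩ := (eventually_mem_nhdsWithin.and hev).exists
      refine ⟨rad, hrad1, y, mem_closedBall_self (le_of_lt hrad1), ?_⟩
      rwa [ENNReal.lt_div_iff_mul_lt (Or.inl (volume_cb_pos y hrad1).ne')
        (Or.inl (volume_cb_ne_top y (le_of_lt hrad1)))] at hrad2
    have hbdd : ∀ q ∈ Ad, q ≤ ρ := by
      rintro q ⟨hq0, z, hyz, hlt⟩
      by_contra hqρ
      push_neg at hqρ
      have h1 : ENNReal.ofReal t * volume (closedBall z q) <
          ENNReal.ofReal t * volume (closedBall c₀ ρ) :=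
        hlt.trans_le ((measure_mono inter_subset_left).trans hFsmall)
      have h2 : volume (closedBall z q) < volume (closedBall c₀ ρ) :=
        (ENNReal.mul_lt_mul_iff_right ht0' ENNReal.ofReal_ne_top).1 h1
      rw [volume_cb z (le_of_lt hq0), volume_cb c₀ hρ.le] at h2
      have h3 : (2*q)^d < (2*ρ)^d := by
        have := (ENNReal.ofReal_lt_ofReal_iff (by positivity)).1 h2
        exact this
      have h4 : (2*ρ)^d ≤ (2*q)^d := by
        apply pow_le_pow_left₀ (by linarith) (by linarith)
      linarith
    have hRpos : 0 < sSup Ad := by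
      obtain ⟨q, hq⟩ := hne
      exact lt_of_lt_of_le hq.1 (le_csSup ⟨ρ, hbdd⟩ hq)
    obtain ⟨q, hqAd, hqgt⟩ := exists_lt_of_lt_csSup hne (half_lt_self hRpos)
    refine ⟨(q, hqAd.2.choose), hqAd.1, hqAd.2.choose_spec.1, hqAd.2.choose_spec.2, ?_⟩
    rintro ⟨q', hq', hq'Ad⟩
    have : q' ≤ sSup Ad := le_csSup ⟨ρ, hbdd⟩ hq'Ad
    have : sSup Ad < 2 * q := by linarith
    linarith [hbdd q hqAd, le_csSup (⟨ρ, hbdd⟩ : BddAbove Ad) hq'Ad]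
  choose! sel hsel1 hsel2 hsel3 hsel4 using Hsel
  set rr : (Fin d → ℝ) → ℝ := fun y => (sel y).1 with hrr
  set zz : (Fin d → ℝ) → (Fin d → ℝ) := fun y => (sel y).2 with hzz
  have hrle : ∀ y ∈ G, rr y ≤ ρ := by
    intro y hy
    by_contra hcon
    push_neg at hcon
    have h1 := hsel3 y hy
    have h2 : ENNReal.ofReal t * volume (closedBall (zz y) (rr y)) <
        ENNReal.ofReal t * volume (closedBall c₀ ρ) :=
      h1.trans_le ((measure_mono inter_subset_left).trans hFsmall)
    have h3 : volume (closedBall (zz y) (rr y)) < volume (closedBall c₀ ρ) :=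
      (ENNReal.mul_lt_mul_iff_right ht0' ENNReal.ofReal_ne_top).1 h2
    rw [volume_cb _ (le_of_lt (hsel1 y hy)), volume_cb c₀ hρ.le] at h3
    have h4 : (2*rr y)^d < (2*ρ)^d := (ENNReal.ofReal_lt_ofReal_iff (by positivity)).1 h3
    have h5 : (2*ρ)^d ≤ (2*rr y)^d := pow_le_pow_left₀ (by linarith) (by linarith) d
    linarith
  obtain ⟨u, huG, hdisj, hcover⟩ :=
    Vitali.exists_disjoint_subfamily_covering_enlargement_closedBall G zz rr ρ hrle 4
      (by norm_num)
  have hucnt : u.Countable := by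
    apply hdisj.countable_of_nonempty_interior
    intro b hb
    have hb' : 0 < rr b := hsel1 b (huG hb)
    exact (Metric.nonempty_ball.2 hb').mono ball_subset_interior_closedBall
  set S := ⋃ b ∈ u, closedBall (zz b) (rr b) with hS
  have hSmeas : MeasurableSet S := by
    exact MeasurableSet.biUnion hucnt (fun b _ => measurableSet_closedBall)
  have hSsub : S ⊆ closedBall c₀ (3*ρ) := by
    intro w hw
    simp only [hS, mem_iUnion] at hw
    obtain ⟨b, hb, hwb⟩ := hw
    have hbG := huG hb
    have h1 : dist b (zz b) ≤ rr b := hsel2 b hbG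
    have h2 : dist b c₀ ≤ ρ := hFb hbG.2
    have h3 : dist w (zz b) ≤ rr b := hwb
    have h4 : rr b ≤ ρ := hrle b hbG
    calc dist w c₀ ≤ dist w (zz b) + dist (zz b) b + dist b c₀ := dist_triangle4 w (zz b) b c₀
      _ ≤ rr b + rr b + ρ := by
          have := h1
          rw [dist_comm (zz b) b]
          linarith
      _ ≤ 3*ρ := by linarith
  refine ⟨S, hSmeas, hSsub, ?_, ?_⟩
  · intro y hy
    simp only [hS, mem_iUnion] at hy
    obtain ⟨b, hb, hyb⟩ := hy
    exact lt_maximal_of_density hF (hsel1 b (huG hb)) (hsel3 b (huG hb)) y hyb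
  · -- the measure bound
    have hGsub : G ⊆ ⋃ b ∈ u, closedBall (zz b) (4 * rr b) := by
      intro y hy
      obtain ⟨b, hb, hsub⟩ := hcover y hy
      exact mem_iUnion₂.2 ⟨b, hb, hsub (hsel2 y hy)⟩
    have hstep1 : volume F ≤ ∑' b : u, volume (F ∩ closedBall (zz b) (4 * rr b)) := by
      have h2 : volume (F \ A) = 0 := by
        rw [diff_eq, inter_comm]
        exact hAae
      have h3 : F ∩ A ⊆ ⋃ b ∈ u, F ∩ closedBall (zz b) (4 * rr b) := by
        intro y hy
        obtain ⟨b, hb, hyb⟩ := mem_iUnion₂.1 (hGsub ⟨hy.2, hy.1⟩)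
        exact mem_iUnion₂.2 ⟨b, hb, hy.1, hyb⟩
      calc volume F ≤ volume (F ∩ A) + volume (F \ A) := measure_le_inter_add_diff _ _ _
        _ = volume (F ∩ A) := by rw [h2, add_zero]
        _ ≤ volume (⋃ b ∈ u, F ∩ closedBall (zz b) (4 * rr b)) := measure_mono h3
        _ ≤ _ := measure_biUnion_le _ hucnt _
    have hparent : ∀ b ∈ u, volume (F ∩ closedBall (zz b) (4 * rr b)) ≤
        ENNReal.ofReal t * volume (closedBall (zz b) (4 * rr b)) := by
      intro b hb
      have hbG := huG hb
      by_contra hcon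
      push_neg at hcon
      exact hsel4 b hbG ⟨4 * rr b, by linarith [hsel1 b hbG], by linarith [hsel1 b hbG],
        zz b, by
          have := hsel2 b hbG
          rw [mem_closedBall] at this ⊢
          linarith [hsel1 b hbG], hcon⟩
    have hvol4 : ∀ b ∈ u, volume (closedBall (zz b) (4 * rr b)) =
        (4:ℝ≥0∞)^d * volume (closedBall (zz b) (rr b)) := by
      intro b hb
      have hb' : 0 < rr b := hsel1 b (huG hb)
      have hbase : (2*(4*rr b))^d = 4^d * (2*rr b)^d := by
        rw [← mul_pow]; congr 1; ring
      rw [volume_cb _ (by linarith), volume_cb _ hb'.le, hbase,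
        ENNReal.ofReal_mul (by positivity), ENNReal.ofReal_pow (by norm_num)]
      norm_num
    calc volume F ≤ ∑' b : u, volume (F ∩ closedBall (zz b) (4 * rr b)) := hstep1
      _ ≤ ∑' b : u, ENNReal.ofReal t * ((4:ℝ≥0∞)^d * volume (closedBall (zz b) (rr b))) := by
          apply ENNReal.tsum_le_tsum
          intro b
          calc volume (F ∩ closedBall (zz b) (4 * rr b))
              ≤ ENNReal.ofReal t * volume (closedBall (zz b) (4 * rr b)) := hparent b b.2
            _ = ENNReal.ofReal t * ((4:ℝ≥0∞)^d * volume (closedBall (zz b) (rr b))) := by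
                rw [hvol4 b b.2]
      _ = ENNReal.ofReal t * ((4:ℝ≥0∞)^d * ∑' b : u, volume (closedBall (zz b) (rr b))) := by
          rw [ENNReal.tsum_mul_left, ENNReal.tsum_mul_left]
      _ = ENNReal.ofReal t * ((4:ℝ≥0∞)^d * volume S) := by
          rw [hS, measure_biUnion hucnt hdisj (fun b _ => measurableSet_closedBall)]

lemma main_case2 {E : Set (Fin d → ℝ)} (hE : MeasurableSet E) {l : ℝ} (hl0 : 0 < l)
    {c x : Fin d → ℝ} {r : ℝ} (hr : 0 < r) (hxc : x ∈ closedBall c r)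
    (hEr : ENNReal.ofReal l * volume (closedBall c r) < volume (E ∩ closedBall c r))
    (Hsmall : ∀ ρ, r ≤ ρ →
      volume (E ∩ closedBall c ρ) ≤ ENNReal.ofReal (1/16) * volume (closedBall c ρ)) :
    ∃ q : ℝ, 0 ≤ q ∧ l * (1 - Real.log l) ≤ (256 * 12^d) * q ∧
      ENNReal.ofReal q ≤ maximal d
        (({y | ENNReal.ofReal l < maximal d (E.indicator 1) y}).indicator
          (maximal d (E.indicator 1))) x := by
  classical
  -- real density function
  set Df : ℝ → ℝ := fun ρ => (volume (E ∩ closedBall c ρ)).toReal / ((2*ρ)^d) with hDf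
  have hvol_ne_top : ∀ ρ : ℝ, 0 ≤ ρ → volume (E ∩ closedBall c ρ) ≠ ⊤ := fun ρ hρ =>
    (lt_of_le_of_lt (measure_mono inter_subset_right)
      (lt_of_le_of_lt (le_of_eq (volume_cb c hρ)) ofReal_lt_top)).ne
  have hD_le : ∀ ρ, r ≤ ρ → Df ρ ≤ 1/16 := by
    intro ρ hρ
    have hρ0 : 0 < ρ := hr.trans_le hρ
    have h1 : volume (E ∩ closedBall c ρ) ≤ ENNReal.ofReal ((1/16) * (2*ρ)^d) := by
      rw [ENNReal.ofReal_mul (by norm_num), ← volume_cb c hρ0.le]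
      exact Hsmall ρ hρ
    have h2 : (volume (E ∩ closedBall c ρ)).toReal ≤ (1/16) * (2*ρ)^d := by
      calc (volume (E ∩ closedBall c ρ)).toReal
          ≤ (ENNReal.ofReal ((1/16) * (2*ρ)^d)).toReal :=
            ENNReal.toReal_mono ofReal_ne_top h1
        _ = (1/16) * (2*ρ)^d := ENNReal.toReal_ofReal (by positivity)
    rw [hDf]
    rw [div_le_iff₀ (by positivity)]
    linarith
  have hDr : l < Df r := by
    have h1 : ENNReal.ofReal (l * (2*r)^d) < volume (E ∩ closedBall c r) := by
      rw [ENNReal.ofReal_mul hl0.le, ← volume_cb c hr.le]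
      exact hEr
    have h2 : l * (2*r)^d < (volume (E ∩ closedBall c r)).toReal := by
      rw [← ENNReal.ofReal_lt_iff_lt_toReal (by positivity) (hvol_ne_top r hr.le)]
      exact h1
    rw [hDf, lt_div_iff₀ (by positivity)]
    linarith
  -- β
  set β := sSup (Df '' Ici r) with hβ
  have hβmem : Df r ∈ Df '' Ici r := ⟨r, mem_Ici.2 le_rfl, rfl⟩
  have hβbdd : BddAbove (Df '' Ici r) := by
    refine ⟨1/16, ?_⟩
    rintro v ⟨ρ, hρ, rfl⟩
    exact hD_le ρ hρ
  have hβl : l < β := lt_of_lt_of_le hDr (le_csSup hβbdd hβmem)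
  have hβ0 : 0 < β := hl0.trans hβl
  have hβ16 : β ≤ 1/16 := csSup_le ⟨_, hβmem⟩ (by rintro v ⟨ρ, hρ, rfl⟩; exact hD_le ρ hρ)
  obtain ⟨v, hvmem, hvβ⟩ := exists_lt_of_lt_csSup ⟨_, hβmem⟩ (half_lt_self hβ0)
  obtain ⟨ρ₀, hρ₀r, rfl⟩ := hvmem
  have hρ₀ : 0 < ρ₀ := hr.trans_le hρ₀r
  -- F
  set F := E ∩ closedBall c ρ₀ with hF
  have hFmeas : MeasurableSet F := hE.inter measurableSet_closedBall
  have hFsub : F ⊆ closedBall c ρ₀ := inter_subset_right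
  have hFtop : volume F ≠ ⊤ := hvol_ne_top ρ₀ hρ₀.le
  have hvolF : (volume F).toReal = Df ρ₀ * (2*ρ₀)^d := by
    rw [hDf]
    field_simp
    rfl
  have hlow : ENNReal.ofReal (β/2 * (2*ρ₀)^d) ≤ volume F := by
    conv_rhs => rw [← ENNReal.ofReal_toReal hFtop]
    apply ENNReal.ofReal_le_ofReal
    rw [hvolF]
    have : 0 < (2*ρ₀)^d := by positivity
    nlinarith
  have hDρ₀β : Df ρ₀ ≤ β := le_csSup hβbdd ⟨ρ₀, hρ₀r, rfl⟩
  have hupp : volume F ≤ ENNReal.ofReal (β * (2*ρ₀)^d) := by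
    conv_lhs => rw [← ENNReal.ofReal_toReal hFtop]
    apply ENNReal.ofReal_le_ofReal
    rw [hvolF]
    have : 0 < (2*ρ₀)^d := by positivity
    nlinarith
  -- levels
  set K := Nat.floor (Real.logb 2 (1/β)) with hK
  obtain ⟨h2K, hKlog⟩ := numK hβ0 hβ16
  have hlev : ∀ k, k < K → ∃ S : Set (Fin d → ℝ), MeasurableSet S ∧
      S ⊆ closedBall c (3*ρ₀) ∧
      (∀ y ∈ S, ENNReal.ofReal (2^k * β) < maximal d (F.indicator 1) y) ∧
      volume F ≤ ENNReal.ofReal (2^k * β) * ((4:ℝ≥0∞)^d * volume S) := by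
    intro k hk
    have hkK : (2:ℝ)^(k+1) ≤ 2^K := pow_le_pow_right₀ one_le_two hk
    have hhalf : 2^k * β ≤ 1/2 := by
      have h1 : (2:ℝ)^(k+1) * β ≤ 2^K * β :=
        mul_le_mul_of_nonneg_right hkK hβ0.le
      have h2 : (2:ℝ)^(k+1) = 2 * 2^k := by ring
      nlinarith
    apply rwt hFmeas c hρ₀ hFsub (by positivity) (by linarith)
    calc volume F ≤ ENNReal.ofReal (β * (2*ρ₀)^d) := hupp
      _ = ENNReal.ofReal β * ENNReal.ofReal ((2*ρ₀)^d) := ENNReal.ofReal_mul hβ0.le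
      _ ≤ ENNReal.ofReal (2^k * β) * ENNReal.ofReal ((2*ρ₀)^d) := by
          apply mul_le_mul_left
          apply ENNReal.ofReal_le_ofReal
          nlinarith [one_le_pow₀ (one_le_two (α := ℝ)) (n := k), hβ0.le]
      _ = ENNReal.ofReal (2^k * β) * volume (closedBall c ρ₀) := by
          rw [volume_cb c hρ₀.le]
  choose! SS hSmeas hSsub hSlt hSvol using hlev
  -- the test function g
  set mE := maximal d (E.indicator 1) with hmE
  set setE := {y | ENNReal.ofReal l < mE y} with hsetE
  set f := setE.indicator mE with hf
  have hMF_le_ME : ∀ y, maximal d (F.indicator 1) y ≤ mE y := by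
    intro y
    apply maximal_mono
    intro z
    apply Set.indicator_le_indicator_of_subset inter_subset_left
    intro _; exact zero_le
  -- pointwise bound
  have hpt : ∀ y, ∑ k ∈ Finset.range K, ENNReal.ofReal (2^k * β / 2) *
      (SS k).indicator 1 y ≤ f y := by
    intro y
    set J := (Finset.range K).filter (fun k => y ∈ SS k) with hJ
    rcases J.eq_empty_or_nonempty with hJe | hJne
    · have : ∀ k ∈ Finset.range K, ENNReal.ofReal (2^k * β / 2) * (SS k).indicator 1 y = 0 := by
        intro k hk
        have hky : y ∉ SS k := by
          intro hmem
          have : k ∈ J := Finset.mem_filter.2 ⟨hk, hmem⟩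
          simp [hJe] at this
        rw [Set.indicator_of_notMem hky, mul_zero]
      rw [Finset.sum_eq_zero this]
      exact zero_le
    · set j := J.max' hJne with hj
      have hjJ : j ∈ J := J.max'_mem hJne
      have hjK : j < K := Finset.mem_range.1 (Finset.mem_filter.1 hjJ).1
      have hyj : y ∈ SS j := (Finset.mem_filter.1 hjJ).2
      have hlt := hSlt j hjK y hyj
      have hyE : y ∈ setE := by
        rw [hsetE]
        refine lt_of_lt_of_le ?_ (hMF_le_ME y)
        refine lt_trans ?_ hlt
        apply ENNReal.ofReal_lt_ofReal_iff_of_nonneg hl0.le |>.2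
        nlinarith [one_le_pow₀ (one_le_two (α := ℝ)) (n := j)]
      have hfy : f y = mE y := Set.indicator_of_mem hyE mE
      have hterm : ∀ k ∈ Finset.range K, ENNReal.ofReal (2^k * β / 2) * (SS k).indicator 1 y ≤
          if k ∈ Finset.range (j+1) then ENNReal.ofReal (2^k * β / 2) else 0 := by
        intro k hk
        by_cases hky : y ∈ SS k
        · have hkJ : k ∈ J := Finset.mem_filter.2 ⟨hk, hky⟩
          have hkj : k ≤ j := J.le_max' k hkJ
          rw [if_pos (Finset.mem_range.2 (Nat.lt_succ_of_le hkj)),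
            Set.indicator_of_mem hky]
          simp
        · rw [Set.indicator_of_notMem hky, mul_zero]
          split <;> simp
      calc ∑ k ∈ Finset.range K, ENNReal.ofReal (2^k * β / 2) * (SS k).indicator 1 y
          ≤ ∑ k ∈ Finset.range K,
            (if k ∈ Finset.range (j+1) then ENNReal.ofReal (2^k * β / 2) else 0) :=
            Finset.sum_le_sum hterm
        _ = ∑ k ∈ Finset.range K ∩ Finset.range (j+1), ENNReal.ofReal (2^k * β / 2) :=
            (Finset.sum_ite_mem _ _ _)
        _ = ∑ k ∈ Finset.range (j+1), ENNReal.ofReal (2^k * β / 2) := by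
            congr 1
            exact Finset.inter_eq_right.mpr (Finset.range_subset_range.mpr hjK)
        _ ≤ ENNReal.ofReal (2^j * β) := geom_bound hβ0.le j
        _ ≤ mE y := le_trans (le_of_lt hlt) (hMF_le_ME y)
        _ = f y := hfy.symm
  -- integrate over V
  set V := closedBall c (3*ρ₀) with hV
  have hintg : ∑ k ∈ Finset.range K, ENNReal.ofReal (2^k * β / 2) * volume (SS k) ≤
      ∫⁻ y in V, f y := by
    calc ∑ k ∈ Finset.range K, ENNReal.ofReal (2^k * β / 2) * volume (SS k)
        = ∑ k ∈ Finset.range K, ∫⁻ y in V, ENNReal.ofReal (2^k * β / 2) *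
            (SS k).indicator 1 y := by
          apply Finset.sum_congr rfl
          intro k hk
          rw [lintegral_const_mul _ ((measurable_one.indicator (hSmeas k (Finset.mem_range.1 hk))))]
          congr 1
          rw [lintegral_indicator (hSmeas k (Finset.mem_range.1 hk))]
          simp only [Pi.one_apply, lintegral_one, Measure.restrict_restrict
            (hSmeas k (Finset.mem_range.1 hk)), Measure.restrict_apply MeasurableSet.univ,
            univ_inter]
          rw [inter_eq_self_of_subset_left (hSsub k (Finset.mem_range.1 hk))]
      _ = ∫⁻ y in V, ∑ k ∈ Finset.range K, ENNReal.ofReal (2^k * β / 2) *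
            (SS k).indicator 1 y := by
          rw [lintegral_finset_sum]
          intro k hk
          exact (measurable_const.mul
            (measurable_one.indicator (hSmeas k (Finset.mem_range.1 hk))))
      _ ≤ ∫⁻ y in V, f y := lintegral_mono fun y => hpt y
  -- lower bound each term
  have hterm_low : ∀ k ∈ Finset.range K,
      ENNReal.ofReal (β/2 * (2*ρ₀)^d) ≤
        (2:ℝ≥0∞) * 4^d * (ENNReal.ofReal (2^k * β / 2) * volume (SS k)) := by
    intro k hk
    have h1 := hSvol k (Finset.mem_range.1 hk)
    calc ENNReal.ofReal (β/2 * (2*ρ₀)^d) ≤ volume F := hlow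
      _ ≤ ENNReal.ofReal (2^k * β) * ((4:ℝ≥0∞)^d * volume (SS k)) := h1
      _ = (2:ℝ≥0∞) * 4^d * (ENNReal.ofReal (2^k * β / 2) * volume (SS k)) := by
          rw [show (2:ℝ)^k * β = 2 * (2^k * β / 2) by ring, ENNReal.ofReal_mul (by norm_num)]
          rw [show ENNReal.ofReal 2 = 2 by simp]
          ring
  -- conclude
  refine ⟨(K:ℝ) * β / (4 * 12^d), by positivity, ?_, ?_⟩
  · have h5 := num5 hl0 hβl hβ16 hKlog
    have heq : (256:ℝ) * 12^d * ((K:ℝ)*β/(4*12^d)) = 64 * ((K:ℝ)*β) := by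
      field_simp
      ring
    linarith
  · set q : ℝ := (K:ℝ) * β / (4 * 12^d) with hq
    have hq0 : 0 ≤ q := by positivity
    have hρ₀r' : r ≤ ρ₀ := hρ₀r
    have hxV : x ∈ V := by
      rw [hV, mem_closedBall]
      have : dist x c ≤ r := mem_closedBall.1 hxc
      linarith
    refine le_trans ?_ (le_maximal f x c (by positivity : (0:ℝ) < 3*ρ₀) hxV)
    rw [ENNReal.le_div_iff_mul_le (Or.inl (volume_cb_pos c (by positivity : (0:ℝ) < 3*ρ₀)).ne')
      (Or.inl (volume_cb_ne_top c (by positivity : (0:ℝ) ≤ 3*ρ₀)))]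
    set C : ℝ≥0∞ := 2 * 4^d with hC
    have hC0 : C ≠ 0 := by
      rw [hC]
      exact mul_ne_zero (by norm_num) (pow_ne_zero _ (by norm_num))
    have hCtop : C ≠ ⊤ := by
      rw [hC]
      exact ENNReal.mul_ne_top (by norm_num) (ENNReal.pow_ne_top (by norm_num))
    have hCof : C = ENNReal.ofReal (2 * 4^d) := by
      rw [hC, ENNReal.ofReal_mul (by norm_num), ENNReal.ofReal_pow (by norm_num)]
      norm_num
    rw [← ENNReal.mul_le_mul_iff_right hC0 hCtop]
    have hLHS : C * (ENNReal.ofReal q * volume V) =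
        (K:ℝ≥0∞) * ENNReal.ofReal (β/2 * (2*ρ₀)^d) := by
      rw [hV, volume_cb c (by positivity : (0:ℝ) ≤ 3*ρ₀), hCof,
        ← ENNReal.ofReal_mul hq0, ← ENNReal.ofReal_mul (by positivity),
        ← ENNReal.ofReal_natCast K, ← ENNReal.ofReal_mul (by positivity)]
      congr 1
      rw [hq]
      have h46 : (4:ℝ)^d * 6^d = 2^d * 12^d := by
        rw [← mul_pow, ← mul_pow]; norm_num
      have h12 : (0:ℝ) < 12^d := by positivity
      field_simp
      linear_combination (K:ℝ) * ρ₀^d * 4 * h46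
    rw [hLHS]
    calc (K:ℝ≥0∞) * ENNReal.ofReal (β/2 * (2*ρ₀)^d)
        = ∑ _k ∈ Finset.range K, ENNReal.ofReal (β/2 * (2*ρ₀)^d) := by
          rw [Finset.sum_const, Finset.card_range, nsmul_eq_mul]
      _ ≤ ∑ k ∈ Finset.range K, C * (ENNReal.ofReal (2^k * β / 2) * volume (SS k)) := by
          apply Finset.sum_le_sum
          intro k hk
          have := hterm_low k hk
          rwa [hC]
      _ = C * ∑ k ∈ Finset.range K, ENNReal.ofReal (2^k * β / 2) * volume (SS k) := by
          rw [Finset.mul_sum]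
      _ ≤ C * ∫⁻ y in V, f y := mul_le_mul_right hintg _

end Aux

/-- There exists a dimensional constant `c > 0` such that for every Borel `E`, every
`λ ∈ (0,1)` and every `x`, `χ_{{Mχ_E > λ}}(x) ≤ (c/(λ(1-log λ))) M(χ_{{Mχ_E > λ}} Mχ_E)(x)`. -/
theorem pointwise_lemma (d : ℕ) : ∃ c : ℝ, 0 < c ∧
    ∀ E : Set (Fin d → ℝ), MeasurableSet E → ∀ l : ℝ, 0 < l → l < 1 → ∀ x : Fin d → ℝ,
      ({y | ENNReal.ofReal l < maximal d (E.indicator 1) y}.indicator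
          (fun _ => (1:ℝ≥0∞)) x) ≤
        ENNReal.ofReal (c / (l * (1 - Real.log l))) *
          maximal d (({y | ENNReal.ofReal l < maximal d (E.indicator 1) y}).indicator
            (maximal d (E.indicator 1))) x := by
  refine ⟨256 * 12^d, by positivity, ?_⟩
  intro E hE l hl0 hl1 x
  by_cases hx : x ∈ {y | ENNReal.ofReal l < maximal d (E.indicator 1) y}
  swap
  · rw [Set.indicator_of_notMem hx]
    exact zero_le
  rw [Set.indicator_of_mem hx]
  have hlam : 0 < l * (1 - Real.log l) := by
    have := Real.log_neg hl0 hl1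
    nlinarith
  have h12d : (1:ℝ) ≤ 12^d := one_le_pow₀ (by norm_num)
  obtain ⟨c, r, hr, hxc, hEr⟩ := exists_cube_of_mem hx hE
  by_cases Hbig : ∃ ρ, r ≤ ρ ∧
      ENNReal.ofReal (1/16) * volume (closedBall c ρ) < volume (E ∩ closedBall c ρ)
  · by_cases hl16 : 1/16 ≤ l
    · refine finish_lem hl0.le hlam ?_ ?_
      · have hB := numB hl16 hl1
        nlinarith
      · refine le_trans ?_ (easy_lower hE hr hxc hEr)
        rw [ENNReal.le_div_iff_mul_le (Or.inl (volume_cb_pos c hr).ne')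
          (Or.inl (volume_cb_ne_top c hr.le))]
        exact hEr.le
    · push_neg at hl16
      obtain ⟨ρ, hρr, hρD⟩ := Hbig
      have hρ0 : 0 < ρ := hr.trans_le hρr
      have hxρ : x ∈ closedBall c ρ := by
        rw [mem_closedBall] at hxc ⊢
        linarith
      have hEρ : ENNReal.ofReal l * volume (closedBall c ρ) < volume (E ∩ closedBall c ρ) :=
        lt_of_le_of_lt (mul_le_mul_left
          (ENNReal.ofReal_le_ofReal hl16.le) _) hρD
      refine finish_lem (q := 1/16) (by norm_num) hlam ?_ ?_
      · have hA := numA hl0 hl1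
        nlinarith
      · refine le_trans ?_ (easy_lower hE hρ0 hxρ hEρ)
        rw [ENNReal.le_div_iff_mul_le (Or.inl (volume_cb_pos c hρ0).ne')
          (Or.inl (volume_cb_ne_top c hρ0.le))]
        exact hρD.le
  · push_neg at Hbig
    obtain ⟨q, hq0, hqineq, hqmax⟩ := main_case2 hE hl0 hr hxc hEr Hbig
    exact finish_lem hq0 hlam hqineq hqmax
end

section
/- Suppose M : Λᵖ_u(w) → Λ^{p,∞}_u(w) is bounded, i.e., there is a constant C₀ with sup_{t>0} tᵖ W(u({|Mf| > t})) ≤ C₀ ‖f‖ᵖ_{Λᵖ_u(w)} for all f. Then for every λ ∈ (0,1) and every Borel set E ⊆ ℝᵈ, ‖χ_{{Mχ_E > λ}} · Mχ_E‖ᵖ_{Λᵖ_u(w)} ≲ (1 + log(1/λ)) ‖χ_E‖ᵖ_{Λᵖ_u(w)}, with implicit constant depending only on C₀, p and dimension. -/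
open MeasureTheory ENNReal Set

lemma maximal_indicator_le_one (d : ℕ) (E : Set (Fin d → ℝ)) (x : Fin d → ℝ) :
    maximal d (E.indicator 1) x ≤ 1 := by
  refine iSup_le fun c => iSup_le fun r => iSup_le fun _ => iSup_le fun _ => ?_
  refine ENNReal.div_le_of_le_mul ?_
  rw [one_mul, ← setLIntegral_one]
  exact lintegral_mono (Set.indicator_le fun _ _ => le_rfl)

lemma Wfun_mono (w : ℝ → ℝ≥0∞) {a b : ℝ≥0∞} (h : a ≤ b) : Wfun w a ≤ Wfun w b :=
  lintegral_mono_set fun s hs => ⟨hs.1, hs.2.trans_le h⟩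

lemma uMeas_mono (d : ℕ) (u : (Fin d → ℝ) → ℝ≥0∞) {A B : Set (Fin d → ℝ)} (h : A ⊆ B) :
    uMeas d u A ≤ uMeas d u B :=
  lintegral_mono_set h

/-- If `M : Λ^p_u(w) → Λ^{p,∞}_u(w)` is bounded, then for every `λ ∈ (0,1)` and Borel `E`,
`‖χ_{{Mχ_E > λ}} Mχ_E‖^p ≲ (1 + log(1/λ)) ‖χ_E‖^p`. -/
theorem log_norm_bound (d : ℕ) (p : ℝ) (hp : 0 < p)
    (u : (Fin d → ℝ) → ℝ≥0∞) (w : ℝ → ℝ≥0∞) (hu : Measurable u) (hw : Measurable w)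
    (C₀ : ℝ) (hC₀ : 0 < C₀)
    (hweak : ∀ f : (Fin d → ℝ) → ℝ≥0∞, Measurable f → ∀ t : ℝ, 0 < t →
      (ENNReal.ofReal t) ^ p *
        Wfun w (uMeas d u {x | ENNReal.ofReal t < maximal d f x}) ≤
          ENNReal.ofReal C₀ * lorentzP d p u w f) :
    ∃ C : ℝ, 0 < C ∧ ∀ E : Set (Fin d → ℝ), MeasurableSet E → ∀ l : ℝ, 0 < l → l < 1 →
      lorentzP d p u w (({x | ENNReal.ofReal l < maximal d (E.indicator 1) x}).indicator
          (maximal d (E.indicator 1))) ≤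
        ENNReal.ofReal (C * (1 + Real.log (1 / l))) *
          lorentzP d p u w (E.indicator 1) := by
  classical
  refine ⟨C₀ * max 1 p, by positivity, fun E hE l hl hl1 => ?_⟩
  set f : (Fin d → ℝ) → ℝ≥0∞ := E.indicator 1 with hfdef
  have hf : Measurable f := measurable_const.indicator hE
  set N := lorentzP d p u w f with hNdef
  set M : (Fin d → ℝ) → ℝ≥0∞ := maximal d f with hMdef
  set S : Set (Fin d → ℝ) := {x | ENNReal.ofReal l < M x} with hSdef
  set g : (Fin d → ℝ) → ℝ≥0∞ := S.indicator M with hgdef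
  have hM1 : ∀ x, M x ≤ 1 := maximal_indicator_le_one d E
  have hg1 : ∀ x, g x ≤ 1 := fun x => by
    by_cases h : x ∈ S
    · simpa [hgdef, Set.indicator_of_mem h] using hM1 x
    · simp [hgdef, Set.indicator_of_notMem h]
  have hL : 0 ≤ Real.log (1 / l) := Real.log_nonneg ((one_le_div hl).2 hl1.le)
  -- key weak-type bound, rearranged
  have key : ∀ t : ℝ, 0 < t →
      Wfun w (uMeas d u {x | ENNReal.ofReal t < M x}) ≤
        ENNReal.ofReal C₀ * N / ENNReal.ofReal (t ^ p) := by
    intro t ht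
    rw [← ENNReal.ofReal_rpow_of_pos ht,
      ENNReal.le_div_iff_mul_le
        (Or.inl (by simp [ENNReal.rpow_pos (ENNReal.ofReal_pos.2 ht) ofReal_ne_top, ne_of_gt]))
        (Or.inl (ENNReal.rpow_ne_top_of_nonneg hp.le ofReal_ne_top)),
      mul_comm]
    exact hweak f hf t ht
  -- pointwise inclusion of level sets of g
  have hsub : ∀ t : ℝ, 0 < t →
      {x | ENNReal.ofReal t < g x} ⊆ {x | ENNReal.ofReal (max t l) < M x} := by
    intro t ht x hx
    simp only [Set.mem_setOf_eq] at hx ⊢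
    by_cases h : x ∈ S
    · rw [hgdef, Set.indicator_of_mem h] at hx
      have h' : ENNReal.ofReal l < M x := h
      rcases max_cases t l with ⟨he, _⟩ | ⟨he, _⟩ <;> rw [he]
      · exact hx
      · exact h'
    · rw [hgdef, Set.indicator_of_notMem h] at hx
      exact absurd hx (by simp)
  -- the integrand of the LHS
  set F : ℝ → ℝ≥0∞ := fun t => ENNReal.ofReal (p * t ^ (p-1)) *
    Wfun w (uMeas d u {x | ENNReal.ofReal t < g x}) with hFdef
  have hLHS : lorentzP d p u w g = ∫⁻ t in Set.Ioi (0:ℝ), F t := rfl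
  -- split the domain
  have hdom : Set.Ioi (0:ℝ) = (Set.Ioc 0 l ∪ Set.Ioc l 1) ∪ Set.Ioi 1 := by
    rw [Set.Ioc_union_Ioc_eq_Ioc hl.le hl1.le, Set.Ioc_union_Ioi_eq_Ioi zero_le_one]
  have hsplit : lorentzP d p u w g =
      (∫⁻ t in Set.Ioc 0 l, F t) + (∫⁻ t in Set.Ioc l 1, F t) + ∫⁻ t in Set.Ioi 1, F t := by
    rw [hLHS,
      show Set.Ioi (0:ℝ) = Set.Ioc 0 1 ∪ Set.Ioi 1 from
        (Set.Ioc_union_Ioi_eq_Ioi zero_le_one).symm,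
      lintegral_union measurableSet_Ioi Set.Ioc_disjoint_Ioi_same,
      show Set.Ioc (0:ℝ) 1 = Set.Ioc 0 l ∪ Set.Ioc l 1 from
        (Set.Ioc_union_Ioc_eq_Ioc hl.le hl1.le).symm,
      lintegral_union measurableSet_Ioc (Set.Ioc_disjoint_Ioc_of_le le_rfl)]
  -- the tail piece vanishes
  have h3 : ∫⁻ t in Set.Ioi (1:ℝ), F t = 0 := by
    rw [setLIntegral_congr_fun_ae measurableSet_Ioi
      (ae_of_all _ fun t (ht : 1 < t) => ?_), lintegral_zero]
    have hempty : {x | ENNReal.ofReal t < g x} = ∅ := by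
      ext x
      simp only [Set.mem_setOf_eq, Set.mem_empty_iff_false, iff_false, not_lt]
      exact le_trans (hg1 x) (ENNReal.one_le_ofReal.2 ht.le)
    have hu0 : uMeas d u {x | ENNReal.ofReal t < g x} = 0 := by
      rw [hempty]; simp [uMeas]
    have hW0 : Wfun w (0 : ℝ≥0∞) = 0 := by
      have : {s : ℝ | 0 < s ∧ ENNReal.ofReal s < (0:ℝ≥0∞)} = ∅ := by
        ext s; simp
      simp [Wfun, this]
    simp [hFdef, hu0, hW0]
  set X : ℝ≥0∞ := ENNReal.ofReal C₀ * N with hXdef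
  -- first piece
  have hint1 : ∫⁻ t in Set.Ioc 0 l, ENNReal.ofReal (p * t ^ (p-1))
      = ENNReal.ofReal (l ^ p) := by
    rw [← ofReal_integral_eq_lintegral_ofReal]
    · congr 1
      rw [← intervalIntegral.integral_of_le hl.le, intervalIntegral.integral_const_mul,
        integral_rpow (Or.inl (by linarith)), sub_add_cancel, Real.zero_rpow hp.ne',
        sub_zero]
      field_simp
    · have hii := intervalIntegral.intervalIntegrable_rpow' (r := p-1) (a := 0) (b := l)
        (by linarith)
      rw [intervalIntegrable_iff, Set.uIoc_of_le hl.le] at hii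
      exact hii.const_mul p
    · filter_upwards [ae_restrict_mem measurableSet_Ioc] with t ht
      exact mul_nonneg hp.le (Real.rpow_nonneg ht.1.le _)
  have h1 : (∫⁻ t in Set.Ioc 0 l, F t) ≤ X := by
    have hrm : Measurable fun t : ℝ => ENNReal.ofReal (p * t ^ (p-1)) := by
      measurability
    have hmeas : Measurable fun t : ℝ =>
        ENNReal.ofReal (p * t ^ (p-1)) * (X / ENNReal.ofReal (l ^ p)) :=
      hrm.mul measurable_const
    calc (∫⁻ t in Set.Ioc 0 l, F t)
        ≤ ∫⁻ t in Set.Ioc 0 l,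
            ENNReal.ofReal (p * t ^ (p-1)) * (X / ENNReal.ofReal (l ^ p)) := by
          refine setLIntegral_mono hmeas fun t ht => ?_
          refine mul_le_mul_right ?_ _
          refine le_trans (Wfun_mono w (uMeas_mono d u ?_)) (key l hl)
          have := hsub t ht.1
          rwa [max_eq_right ht.2] at this
      _ = ENNReal.ofReal (l ^ p) * (X / ENNReal.ofReal (l ^ p)) := by
          rw [lintegral_mul_const _ hrm, hint1]
      _ = X := by
          rw [mul_comm, ENNReal.div_mul_cancel
            (ENNReal.ofReal_pos.2 (Real.rpow_pos_of_pos hl p)).ne' ofReal_ne_top]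
  -- second piece
  have hint2 : ∫⁻ t in Set.Ioc l 1, ENNReal.ofReal (p * t⁻¹)
      = ENNReal.ofReal (p * Real.log (1 / l)) := by
    rw [← ofReal_integral_eq_lintegral_ofReal]
    · congr 1
      rw [← intervalIntegral.integral_of_le hl1.le, intervalIntegral.integral_const_mul,
        integral_inv (by
          rw [Set.uIcc_of_le hl1.le]
          exact fun h => absurd h.1 (not_le.mpr hl)),
        one_div]
    · have hcont : ContinuousOn (fun t : ℝ => p * t⁻¹) (Set.Icc l 1) :=
        continuousOn_const.mul (continuousOn_id.inv₀ fun x hx =>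
          (lt_of_lt_of_le hl hx.1).ne')
      exact (hcont.integrableOn_Icc).mono_set Set.Ioc_subset_Icc_self
    · filter_upwards [ae_restrict_mem measurableSet_Ioc] with t ht
      exact mul_nonneg hp.le (inv_nonneg.2 (hl.trans ht.1).le)
  have h2 : (∫⁻ t in Set.Ioc l 1, F t) ≤ X * ENNReal.ofReal (p * Real.log (1 / l)) := by
    have hmeasg : Measurable fun t : ℝ => ENNReal.ofReal (p * t⁻¹) :=
      (measurable_const.mul measurable_inv).ennreal_ofReal
    calc (∫⁻ t in Set.Ioc l 1, F t)
        ≤ ∫⁻ t in Set.Ioc l 1, X * ENNReal.ofReal (p * t⁻¹) := by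
          refine setLIntegral_mono (measurable_const.mul hmeasg) fun t ht => ?_
          have ht0 : 0 < t := hl.trans ht.1
          have hW : Wfun w (uMeas d u {x | ENNReal.ofReal t < g x})
              ≤ X / ENNReal.ofReal (t ^ p) := by
            refine le_trans (Wfun_mono w (uMeas_mono d u ?_)) (key t ht0)
            have := hsub t ht0
            rwa [max_eq_left ht.1.le] at this
          calc F t ≤ ENNReal.ofReal (p * t ^ (p-1)) * (X / ENNReal.ofReal (t ^ p)) :=
                mul_le_mul_right hW _
            _ = X * (ENNReal.ofReal (p * t ^ (p-1)) / ENNReal.ofReal (t ^ p)) := by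
                rw [div_eq_mul_inv, div_eq_mul_inv]; ring
            _ = X * ENNReal.ofReal (p * t⁻¹) := by
                rw [← ENNReal.ofReal_div_of_pos (Real.rpow_pos_of_pos ht0 p)]
                congr 1
                have hts : t ^ (p-1) = t ^ p / t := by
                  rw [Real.rpow_sub ht0, Real.rpow_one]
                rw [hts]
                field_simp
      _ = X * ∫⁻ t in Set.Ioc l 1, ENNReal.ofReal (p * t⁻¹) :=
          lintegral_const_mul X hmeasg
      _ = X * ENNReal.ofReal (p * Real.log (1 / l)) := by rw [hint2]
  -- assemble
  have hXle : X + X * ENNReal.ofReal (p * Real.log (1 / l)) ≤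
      ENNReal.ofReal (C₀ * max 1 p * (1 + Real.log (1 / l))) * N := by
    have hstep : X + X * ENNReal.ofReal (p * Real.log (1 / l))
        = ENNReal.ofReal (C₀ * (1 + p * Real.log (1 / l))) * N := by
      rw [hXdef, ENNReal.ofReal_mul hC₀.le, ENNReal.ofReal_add zero_le_one
        (mul_nonneg hp.le hL), ENNReal.ofReal_one]
      ring
    rw [hstep]
    refine mul_le_mul_left (ENNReal.ofReal_le_ofReal ?_) N
    have h1' : (1:ℝ) ≤ max 1 p := le_max_left 1 p
    have h2' : p ≤ max 1 p := le_max_right 1 p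
    nlinarith [hL, hC₀.le, mul_nonneg hC₀.le hL]
  calc lorentzP d p u w g
      = (∫⁻ t in Set.Ioc 0 l, F t) + (∫⁻ t in Set.Ioc l 1, F t)
        + ∫⁻ t in Set.Ioi 1, F t := hsplit
    _ ≤ X + X * ENNReal.ofReal (p * Real.log (1 / l)) + 0 :=
        add_le_add (add_le_add h1 h2) h3.le
    _ = X + X * ENNReal.ofReal (p * Real.log (1 / l)) := by rw [add_zero]
    _ ≤ ENNReal.ofReal (C₀ * max 1 p * (1 + Real.log (1 / l))) * N := hXle
end

section
/- Let w be a weight on (0,∞) with W(t) = ∫₀ᵗ w(s) ds. For p > 1, if w satisfies the B_p condition rᵖ ∫_r^∞ w(t)/tᵖ dt ≤ C ∫₀^r w(s) ds for all r > 0, then w satisfies the B_{p,∞} condition W(t)/tᵖ ≤ C' W(r)/rᵖ for all 0 < r < t. -/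
open MeasureTheory ENNReal Set

/-- For `p > 1`, the `B_p` condition implies the `B_{p,∞}` condition. -/
theorem Bp_implies_Bp_infty (p : ℝ) (hp : 1 < p) (w : ℝ → ℝ≥0∞) (hw : Measurable w)
    (C : ℝ) (hC : 0 < C)
    (hBp : ∀ r : ℝ, 0 < r →
      ENNReal.ofReal (r ^ p) * ∫⁻ t in Set.Ioi r, w t / ENNReal.ofReal (t ^ p) ≤
        ENNReal.ofReal C * ∫⁻ s in Set.Ioc (0:ℝ) r, w s) :
    ∃ C' : ℝ, 0 < C' ∧ ∀ r t : ℝ, 0 < r → r < t →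
      (∫⁻ s in Set.Ioc (0:ℝ) t, w s) / ENNReal.ofReal (t ^ p) ≤
        ENNReal.ofReal C' * (∫⁻ s in Set.Ioc (0:ℝ) r, w s) / ENNReal.ofReal (r ^ p) := by
  refine ⟨C + 1, by linarith, fun r t hr hrt => ?_⟩
  have ht : 0 < t := hr.trans hrt
  have hrp : (0:ℝ) < r ^ p := Real.rpow_pos_of_pos hr p
  have htp : (0:ℝ) < t ^ p := Real.rpow_pos_of_pos ht p
  set Rp := ENNReal.ofReal (r ^ p) with hRp
  set Tp := ENNReal.ofReal (t ^ p) with hTp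
  have hRp0 : Rp ≠ 0 := by simp [hRp, hrp]
  have hRpT : Rp ≠ ⊤ := ofReal_ne_top
  have hTp0 : Tp ≠ 0 := by simp [hTp, htp]
  have hTpT : Tp ≠ ⊤ := ofReal_ne_top
  set Wr := ∫⁻ s in Set.Ioc (0:ℝ) r, w s with hWr
  set I := ∫⁻ s in Set.Ioi r, w s / ENNReal.ofReal (s ^ p) with hI
  have hsplit : (∫⁻ s in Set.Ioc (0:ℝ) t, w s) = Wr + ∫⁻ s in Set.Ioc r t, w s := by
    rw [hWr, ← lintegral_union measurableSet_Ioc (Set.Ioc_disjoint_Ioc_of_le le_rfl),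
      Set.Ioc_union_Ioc_eq_Ioc hr.le hrt.le]
  have hmid : (∫⁻ s in Set.Ioc r t, w s) ≤ Tp * I := by
    have h1 : (∫⁻ s in Set.Ioc r t, w s) ≤
        ∫⁻ s in Set.Ioc r t, Tp * (w s / ENNReal.ofReal (s ^ p)) := by
      apply setLIntegral_mono' measurableSet_Ioc
      intro s hs
      have hs0 : 0 < s := hr.trans hs.1
      have hsp : (0:ℝ) < s ^ p := Real.rpow_pos_of_pos hs0 p
      have hle : ENNReal.ofReal (s ^ p) ≤ Tp := by
        exact ENNReal.ofReal_le_ofReal (Real.rpow_le_rpow hs0.le hs.2 (by linarith))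
      calc w s = w s / ENNReal.ofReal (s ^ p) * ENNReal.ofReal (s ^ p) := by
            rw [ENNReal.div_mul_cancel (by simp [hsp]) ofReal_ne_top]
        _ ≤ w s / ENNReal.ofReal (s ^ p) * Tp := by gcongr
        _ = Tp * (w s / ENNReal.ofReal (s ^ p)) := mul_comm _ _
    have h2 : (∫⁻ s in Set.Ioc r t, Tp * (w s / ENNReal.ofReal (s ^ p))) =
        Tp * ∫⁻ s in Set.Ioc r t, w s / ENNReal.ofReal (s ^ p) := by
      rw [lintegral_const_mul]
      exact hw.div (ENNReal.measurable_ofReal.comp (measurable_id.pow_const p))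
    have h3 : (∫⁻ s in Set.Ioc r t, w s / ENNReal.ofReal (s ^ p)) ≤ I :=
      lintegral_mono_set Set.Ioc_subset_Ioi_self
    calc (∫⁻ s in Set.Ioc r t, w s) ≤ _ := h1
      _ = _ := h2
      _ ≤ Tp * I := by gcongr
  have hIle : I ≤ ENNReal.ofReal C * Wr / Rp := by
    rw [ENNReal.le_div_iff_mul_le (Or.inl hRp0) (Or.inl hRpT), mul_comm]
    exact hBp r hr
  have key : (∫⁻ s in Set.Ioc (0:ℝ) t, w s) / Tp ≤
      Wr / Rp + ENNReal.ofReal C * Wr / Rp := by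
    calc (∫⁻ s in Set.Ioc (0:ℝ) t, w s) / Tp
        = (Wr + ∫⁻ s in Set.Ioc r t, w s) / Tp := by rw [hsplit]
      _ ≤ (Wr + Tp * (ENNReal.ofReal C * Wr / Rp)) / Tp := by
          gcongr
          exact hmid.trans (by gcongr)
      _ = Wr / Tp + Tp * (ENNReal.ofReal C * Wr / Rp) / Tp := by
          rw [ENNReal.add_div]
      _ = Wr / Tp + ENNReal.ofReal C * Wr / Rp := by
          rw [mul_comm Tp, mul_div_assoc, ENNReal.div_self hTp0 hTpT, mul_one]
      _ ≤ Wr / Rp + ENNReal.ofReal C * Wr / Rp := by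
          gcongr
          exact ENNReal.ofReal_le_ofReal (Real.rpow_le_rpow hr.le hrt.le (by linarith))
  calc (∫⁻ s in Set.Ioc (0:ℝ) t, w s) / Tp ≤ Wr / Rp + ENNReal.ofReal C * Wr / Rp := key
    _ = (Wr + ENNReal.ofReal C * Wr) / Rp := by rw [ENNReal.add_div]
    _ = ENNReal.ofReal (C + 1) * Wr / Rp := by
        rw [ENNReal.ofReal_add hC.le zero_le_one, ofReal_one, add_mul, one_mul, add_comm]
end
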